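/- Lemma 3.4 (Gaussian smoothing). Let (Ω', 𝓕, P) be a probability space, S a measurable space, η : Ω' → S a random element, and Z a standard normal random variable independent of η. Let A ⊆ ℝ × S be measurable, with sections A(s) := {z ∈ ℝ : (z,s) ∈ A}, and let b ≠ 0. Then the function h(x) := P(x + bZ ∈ A(η)) is twice continuously differentiable on ℝ, and for all x, y ∈ ℝ: |h(x+y) − h(x) − y·h'(x) − y²·h''(x)/2| ≤ 0.4·|y/b|³. -/

import Mathlib

open MeasureTheory ProbabilityTheory Set
open scoped ENNReal NNReal

noncomputable section

namespace SmoothAux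

def cc (b : ℝ) : ℝ := (Real.sqrt (2 * Real.pi) * |b|)⁻¹
def k0 (b t : ℝ) : ℝ := cc b * Real.exp (-t ^ 2 / (2 * b ^ 2))
def k1 (b t : ℝ) : ℝ := (-t / b ^ 2) * k0 b t
def k2 (b t : ℝ) : ℝ := ((t ^ 2 / b ^ 2 - 1) / b ^ 2) * k0 b t
def k3 (b t : ℝ) : ℝ := ((3 * t / b ^ 2 - t ^ 3 / b ^ 4) / b ^ 2) * k0 b t

variable {b : ℝ}

lemma cc_pos (hb : b ≠ 0) : 0 < cc b := by
  have : 0 < Real.sqrt (2 * Real.pi) := Real.sqrt_pos.mpr (by positivity)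
  have : 0 < |b| := abs_pos.mpr hb
  unfold cc; positivity

lemma k0_pos (hb : b ≠ 0) (t : ℝ) : 0 < k0 b t := by
  have := cc_pos hb; unfold k0; positivity

lemma hasDerivAt_exp_part (hb : b ≠ 0) (t : ℝ) :
    HasDerivAt (fun t : ℝ => Real.exp (-t ^ 2 / (2 * b ^ 2)))
      ((-t / b ^ 2) * Real.exp (-t ^ 2 / (2 * b ^ 2))) t := by
  have h1 : HasDerivAt (fun t : ℝ => -t ^ 2 / (2 * b ^ 2)) (-t / b ^ 2) t := by
    have := ((hasDerivAt_pow 2 t).neg).div_const (2 * b ^ 2)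
    refine this.congr_deriv ?_
    have hb2 : b ^ 2 ≠ 0 := pow_ne_zero 2 hb
    field_simp
    ring
  simpa [mul_comm] using h1.exp

lemma hasDerivAt_k0 (hb : b ≠ 0) (t : ℝ) : HasDerivAt (k0 b) (k1 b t) t := by
  have := (hasDerivAt_exp_part hb t).const_mul (cc b)
  have h2 : HasDerivAt (fun t => cc b * Real.exp (-t ^ 2 / (2 * b ^ 2))) (k1 b t) t := by
    refine this.congr_deriv ?_
    simp only [k1, k0]; ring
  exact h2

lemma hasDerivAt_k1 (hb : b ≠ 0) (t : ℝ) : HasDerivAt (k1 b) (k2 b t) t := by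
  have hp : HasDerivAt (fun t : ℝ => -t / b ^ 2) (-1 / b ^ 2) t := by
    simpa using ((hasDerivAt_id t).neg.div_const (b ^ 2))
  have := hp.mul (hasDerivAt_k0 hb t)
  refine this.congr_deriv ?_
  have hb2 : b ^ 2 ≠ 0 := pow_ne_zero 2 hb
  simp only [k2, k1, k0]
  field_simp
  ring

lemma hasDerivAt_k2 (hb : b ≠ 0) (t : ℝ) : HasDerivAt (k2 b) (k3 b t) t := by
  have hp : HasDerivAt (fun t : ℝ => (t ^ 2 / b ^ 2 - 1) / b ^ 2) (2 * t / b ^ 2 / b ^ 2) t := by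
    have := (((hasDerivAt_pow 2 t).div_const (b ^ 2)).sub_const 1).div_const (b ^ 2)
    refine this.congr_deriv ?_
    ring
  have := hp.mul (hasDerivAt_k0 hb t)
  refine this.congr_deriv ?_
  have hb2 : b ^ 2 ≠ 0 := pow_ne_zero 2 hb
  simp only [k3, k2, k1, k0]
  field_simp
  ring

lemma continuous_k0 : Continuous (k0 b) := by
  unfold k0; fun_prop
lemma continuous_k1 : Continuous (k1 b) := by
  unfold k1 k0; fun_prop
lemma continuous_k2 : Continuous (k2 b) := by
  unfold k2 k0; fun_prop
lemma continuous_k3 : Continuous (k3 b) := by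
  unfold k3 k0; fun_prop


lemma abs_pow4 (t : ℝ) : |t| ^ 4 = t ^ 4 := by
  rw [pow_abs, abs_of_nonneg (by positivity)]

lemma abs_le_one_add_pow (t : ℝ) : |t| ≤ 1 + t ^ 4 := by
  rcases le_or_gt (|t|) 1 with h | h
  · nlinarith [pow_nonneg (abs_nonneg t) 4, abs_pow4 t]
  · have h4 : |t| ≤ |t| ^ 4 := le_self_pow₀ h.le (by norm_num)
    nlinarith [abs_pow4 t]

lemma sq_le_one_add_pow (t : ℝ) : t ^ 2 ≤ 1 + t ^ 4 := by
  nlinarith [sq_nonneg (t ^ 2 - 1)]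

lemma cube_le_one_add_pow (t : ℝ) : |t| ^ 3 ≤ 1 + t ^ 4 := by
  rcases le_or_gt (|t|) 1 with h | h
  · have h0 : (0:ℝ) ≤ |t| := abs_nonneg t
    have h1 : |t| ^ 3 ≤ 1 := pow_le_one₀ h0 h
    nlinarith [abs_pow4 t, pow_nonneg h0 4]
  · have h4 : |t| ^ 3 ≤ |t| ^ 4 := pow_le_pow_right₀ h.le (by norm_num)
    nlinarith [abs_pow4 t]

lemma one_add_pow_le_exp (hb : b ≠ 0) (t : ℝ) :
    1 + t ^ 4 ≤ (1 + 64 * b ^ 4) * Real.exp (t ^ 2 / (4 * b ^ 2)) := by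
  set x := t ^ 2 / (4 * b ^ 2) with hx
  have hb2 : (0:ℝ) < b ^ 2 := by positivity
  have hx0 : 0 ≤ x := by positivity
  have h1 : (1:ℝ) ≤ Real.exp x := Real.one_le_exp hx0
  have h2 : Real.exp x = Real.exp (x/2) * Real.exp (x/2) := by
    rw [← Real.exp_add]; ring_nf
  have h3 : 1 + x/2 ≤ Real.exp (x/2) := by
    have := Real.add_one_le_exp (x/2); linarith
  have h4 : x ^ 2 / 4 ≤ Real.exp x := by
    rw [h2]; nlinarith
  have h5 : t ^ 4 = x ^ 2 * (16 * b ^ 4) := by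
    rw [hx]; field_simp; ring
  have h6 : t ^ 4 ≤ 64 * b ^ 4 * Real.exp x := by
    rw [h5]; nlinarith [pow_pos hb2 2]
  nlinarith [pow_pos hb2 2]

/-- generic: polynomial-Gaussian bounds give a `exp (-t²/(4b²))` dominating bound -/
lemma bound_of_poly (hb : b ≠ 0) {g : ℝ → ℝ} {D : ℝ}
    (hg : ∀ t, |g t| ≤ D * (1 + t ^ 4) * Real.exp (-t ^ 2 / (2 * b ^ 2))) :
    ∀ t, |g t| ≤ (D * (1 + 64 * b ^ 4)) * Real.exp (-t ^ 2 / (4 * b ^ 2)) := by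
  have hD : 0 ≤ D := by
    have := (abs_nonneg (g 0)).trans (hg 0)
    simpa using this
  intro t
  refine (hg t).trans ?_
  have key := one_add_pow_le_exp hb t
  have hb2 : b ^ 2 ≠ 0 := pow_ne_zero 2 hb
  have hsplit : Real.exp (-t ^ 2 / (2 * b ^ 2))
      = Real.exp (t ^ 2 / (4 * b ^ 2)) * Real.exp (-t ^ 2 / (4 * b ^ 2))
        * Real.exp (-t ^ 2 / (2 * b ^ 2)) := by
    rw [← Real.exp_add, ← Real.exp_add]
    congr 1
    field_simp
    ring
  have hexp3 : (0:ℝ) < Real.exp (-t ^ 2 / (2 * b ^ 2)) := Real.exp_pos _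
  have step : D * (1 + t ^ 4) ≤ D * ((1 + 64 * b ^ 4) * Real.exp (t ^ 2 / (4 * b ^ 2))) := by
    nlinarith
  calc D * (1 + t ^ 4) * Real.exp (-t ^ 2 / (2 * b ^ 2))
      ≤ D * ((1 + 64 * b ^ 4) * Real.exp (t ^ 2 / (4 * b ^ 2)))
          * Real.exp (-t ^ 2 / (2 * b ^ 2)) := by nlinarith
    _ = (D * (1 + 64 * b ^ 4)) * Real.exp (t ^ 2 / (4 * b ^ 2) + -t ^ 2 / (2 * b ^ 2)) := by
        rw [Real.exp_add]; ring
    _ = (D * (1 + 64 * b ^ 4)) * Real.exp (-t ^ 2 / (4 * b ^ 2)) := by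
        congr 1
        field_simp
        try ring


lemma abs_ki_eq (hb : b ≠ 0) (p t : ℝ) : |p * k0 b t| = |p| * k0 b t := by
  rw [abs_mul, abs_of_pos (k0_pos hb t)]

lemma ki_poly_bound (hb : b ≠ 0) {p D t : ℝ} (h : |p| ≤ D * (1 + t ^ 4)) :
    |p * k0 b t| ≤ (D * cc b) * (1 + t ^ 4) * Real.exp (-t ^ 2 / (2 * b ^ 2)) := by
  rw [abs_ki_eq hb]
  calc |p| * k0 b t ≤ (D * (1 + t ^ 4)) * k0 b t :=
        mul_le_mul_of_nonneg_right h (k0_pos hb t).le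
    _ = (D * cc b) * (1 + t ^ 4) * Real.exp (-t ^ 2 / (2 * b ^ 2)) := by
        rw [k0]; ring

lemma exists_bound_k0 (hb : b ≠ 0) :
    ∃ C, ∀ t, |k0 b t| ≤ C * Real.exp (-t ^ 2 / (4 * b ^ 2)) := by
  refine ⟨_, bound_of_poly (D := cc b) hb ?_⟩
  intro t
  have h : k0 b t = (1 : ℝ) * k0 b t := by ring
  rw [h]
  have := ki_poly_bound hb (p := 1) (D := 1) (t := t) (by
    have : (0:ℝ) ≤ t ^ 4 := by positivity
    rw [abs_one]; linarith)
  calc |1 * k0 b t| ≤ (1 * cc b) * (1 + t ^ 4) * Real.exp (-t ^ 2 / (2 * b ^ 2)) := this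
    _ = cc b * (1 + t ^ 4) * Real.exp (-t ^ 2 / (2 * b ^ 2)) := by ring

lemma exists_bound_k1 (hb : b ≠ 0) :
    ∃ C, ∀ t, |k1 b t| ≤ C * Real.exp (-t ^ 2 / (4 * b ^ 2)) := by
  refine ⟨_, bound_of_poly (D := 1 / b ^ 2 * cc b) hb ?_⟩
  intro t
  refine ki_poly_bound hb ?_
  have hb2 : (0:ℝ) < b ^ 2 := by positivity
  have h1 := abs_le_one_add_pow t
  rw [abs_div, abs_neg, abs_of_pos hb2]
  rw [show 1 / b ^ 2 * (1 + t ^ 4) = (1 + t ^ 4) / b ^ 2 by ring]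
  gcongr

lemma exists_bound_k2 (hb : b ≠ 0) :
    ∃ C, ∀ t, |k2 b t| ≤ C * Real.exp (-t ^ 2 / (4 * b ^ 2)) := by
  refine ⟨_, bound_of_poly (D := (1 / b ^ 2 + 1) / b ^ 2 * cc b) hb ?_⟩
  intro t
  refine ki_poly_bound hb ?_
  have hb2 : (0:ℝ) < b ^ 2 := by positivity
  have h1 := sq_le_one_add_pow t
  have ht4 : (0:ℝ) ≤ t ^ 4 := by positivity
  rw [abs_div, abs_of_pos hb2]
  rw [show (1 / b ^ 2 + 1) / b ^ 2 * (1 + t ^ 4) = ((1 / b ^ 2 + 1) * (1 + t ^ 4)) / b ^ 2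
    by ring]
  gcongr
  have h2 : |t ^ 2 / b ^ 2 - 1| ≤ t ^ 2 / b ^ 2 + 1 := by
    have := abs_sub (t ^ 2 / b ^ 2) (1 : ℝ)
    simpa [abs_of_nonneg (by positivity : (0:ℝ) ≤ t ^ 2 / b ^ 2)] using this
  have h3 : t ^ 2 / b ^ 2 ≤ (1 + t ^ 4) / b ^ 2 := by gcongr
  have h4 : (1 / b ^ 2 + 1) * (1 + t ^ 4) = (1 + t ^ 4) / b ^ 2 + (1 + t ^ 4) := by ring
  rw [h4]
  linarith

lemma exists_bound_k3 (hb : b ≠ 0) :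
    ∃ C, ∀ t, |k3 b t| ≤ C * Real.exp (-t ^ 2 / (4 * b ^ 2)) := by
  refine ⟨_, bound_of_poly (D := (3 / b ^ 2 + 1 / b ^ 4) / b ^ 2 * cc b) hb ?_⟩
  intro t
  refine ki_poly_bound hb ?_
  have hb2 : (0:ℝ) < b ^ 2 := by positivity
  have hb4 : (0:ℝ) < b ^ 4 := by positivity
  have h1 := abs_le_one_add_pow t
  have h3 := cube_le_one_add_pow t
  rw [abs_div, abs_of_pos hb2]
  rw [show (3 / b ^ 2 + 1 / b ^ 4) / b ^ 2 * (1 + t ^ 4)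
      = ((3 / b ^ 2 + 1 / b ^ 4) * (1 + t ^ 4)) / b ^ 2 by ring]
  gcongr
  have h2 : |3 * t / b ^ 2 - t ^ 3 / b ^ 4| ≤ 3 * |t| / b ^ 2 + |t| ^ 3 / b ^ 4 := by
    refine (abs_sub _ _).trans ?_
    have e1 : |3 * t / b ^ 2| = 3 * |t| / b ^ 2 := by
      rw [abs_div, abs_mul, abs_of_pos hb2]; norm_num
    have e2 : |t ^ 3 / b ^ 4| = |t| ^ 3 / b ^ 4 := by
      rw [abs_div, ← pow_abs, abs_of_pos hb4]
    rw [e1, e2]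
  have a1 : 3 * |t| / b ^ 2 ≤ 3 * (1 + t ^ 4) / b ^ 2 := by gcongr
  have a2 : |t| ^ 3 / b ^ 4 ≤ (1 + t ^ 4) / b ^ 4 := by gcongr
  have h4 : (3 / b ^ 2 + 1 / b ^ 4) * (1 + t ^ 4)
      = 3 * (1 + t ^ 4) / b ^ 2 + (1 + t ^ 4) / b ^ 4 := by ring
  rw [h4]
  linarith

lemma integrable_gauss (hb : b ≠ 0) {r : ℝ} (hr : 0 < r) (x₀ : ℝ) :
    Integrable (fun u : ℝ => Real.exp (-(u - x₀) ^ 2 / (r * b ^ 2))) := by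
  have hrb : (0:ℝ) < (r * b ^ 2)⁻¹ := by positivity
  have h : Integrable (fun u : ℝ => Real.exp (-((r * b ^ 2)⁻¹) * u ^ 2)) :=
    integrable_exp_neg_mul_sq hrb
  have h2 : Integrable (fun u : ℝ => Real.exp (-((r * b ^ 2)⁻¹) * (u - x₀) ^ 2)) :=
    h.comp_sub_right x₀
  have he : (fun u : ℝ => Real.exp (-(u - x₀) ^ 2 / (r * b ^ 2)))
      = fun u : ℝ => Real.exp (-((r * b ^ 2)⁻¹) * (u - x₀) ^ 2) := by
    funext u
    congr 1
    field_simp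
  rw [he]
  exact h2


lemma measurable_g_shift {g : ℝ → ℝ} (hg : Measurable g) (x : ℝ) :
    Measurable fun u : ℝ => g (u - x) :=
  hg.comp (measurable_id.sub measurable_const)

lemma integrable_dominated (hb : b ≠ 0) {w g : ℝ → ℝ}
    (hw : Measurable w) (hw0 : ∀ u, 0 ≤ w u) (hw1 : ∀ u, w u ≤ 1)
    (hgm : Measurable g) {C : ℝ}
    (hgb : ∀ t, |g t| ≤ C * Real.exp (-t ^ 2 / (4 * b ^ 2))) (x : ℝ) :
    Integrable (fun u => w u * g (u - x)) := by
  refine Integrable.mono' ((integrable_gauss hb (by norm_num : (0:ℝ) < 4) x).const_mul C)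
    (hw.mul (measurable_g_shift hgm x)).aestronglyMeasurable
    (Filter.Eventually.of_forall fun u => ?_)
  rw [norm_mul, Real.norm_eq_abs, Real.norm_eq_abs, abs_of_nonneg (hw0 u)]
  calc w u * |g (u - x)| ≤ 1 * |g (u - x)| :=
        mul_le_mul_of_nonneg_right (hw1 u) (abs_nonneg _)
    _ = |g (u - x)| := one_mul _
    _ ≤ C * Real.exp (-(u - x) ^ 2 / (4 * b ^ 2)) := hgb _

lemma hasDerivAt_smoothed (hb : b ≠ 0) {w g g' : ℝ → ℝ}
    (hw : Measurable w) (hw0 : ∀ u, 0 ≤ w u) (hw1 : ∀ u, w u ≤ 1)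
    (hg : ∀ t, HasDerivAt g (g' t) t) (hg'm : Measurable g')
    {C C' : ℝ}
    (hgb : ∀ t, |g t| ≤ C * Real.exp (-t ^ 2 / (4 * b ^ 2)))
    (hg'b : ∀ t, |g' t| ≤ C' * Real.exp (-t ^ 2 / (4 * b ^ 2)))
    (x₀ : ℝ) :
    HasDerivAt (fun x => ∫ u, w u * g (u - x)) (∫ u, w u * -g' (u - x₀)) x₀ := by
  have hC' : 0 ≤ C' := by
    have h0 := (abs_nonneg (g' 0)).trans (hg'b 0)
    simpa using h0
  have hgc : Continuous g := by
    rw [continuous_iff_continuousAt]; exact fun t => (hg t).continuousAt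
  have hF_meas : ∀ x : ℝ, AEStronglyMeasurable (fun u => w u * g (u - x)) volume :=
    fun x => (hw.mul (measurable_g_shift hgc.measurable x)).aestronglyMeasurable
  have hF'_meas : AEStronglyMeasurable (fun u => w u * -g' (u - x₀)) volume :=
    (hw.mul (measurable_g_shift hg'm x₀).neg).aestronglyMeasurable
  have hFint : Integrable (fun u => w u * g (u - x₀)) :=
    integrable_dominated hb hw hw0 hw1 hgc.measurable hgb x₀
  have bound_int : Integrable
      (fun u => C' * Real.exp ((4 * b ^ 2)⁻¹) * Real.exp (-(u - x₀) ^ 2 / (8 * b ^ 2))) :=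
    (integrable_gauss hb (by norm_num : (0:ℝ) < 8) x₀).const_mul _
  have h_bound : ∀ᵐ u ∂(volume : Measure ℝ), ∀ x ∈ Metric.ball x₀ 1,
      ‖w u * -g' (u - x)‖ ≤ C' * Real.exp ((4 * b ^ 2)⁻¹)
        * Real.exp (-(u - x₀) ^ 2 / (8 * b ^ 2)) := by
    refine Filter.Eventually.of_forall fun u => fun x hx => ?_
    have hd : |x - x₀| < 1 := by
      rw [Metric.mem_ball, Real.dist_eq] at hx; exact hx
    have hd1 : (x - x₀) ^ 2 ≤ 1 := by nlinarith [abs_lt.mp hd]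
    have hb2 : (0:ℝ) < b ^ 2 := by positivity
    have hq : (u - x₀) ^ 2 / 2 - 1 ≤ (u - x) ^ 2 := by
      nlinarith [sq_nonneg ((u - x₀) - 2 * (x - x₀))]
    have key : Real.exp (-(u - x) ^ 2 / (4 * b ^ 2))
        ≤ Real.exp ((4 * b ^ 2)⁻¹) * Real.exp (-(u - x₀) ^ 2 / (8 * b ^ 2)) := by
      rw [← Real.exp_add]
      apply Real.exp_le_exp.mpr
      have expand : (4 * b ^ 2)⁻¹ + -(u - x₀) ^ 2 / (8 * b ^ 2) - (-(u - x) ^ 2 / (4 * b ^ 2))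
          = ((u - x) ^ 2 - ((u - x₀) ^ 2 / 2 - 1)) / (4 * b ^ 2) := by
        field_simp
        ring
      have hnn : 0 ≤ ((u - x) ^ 2 - ((u - x₀) ^ 2 / 2 - 1)) / (4 * b ^ 2) := by
        apply div_nonneg (by linarith) (by positivity)
      linarith [expand ▸ hnn]
    rw [norm_mul, Real.norm_eq_abs, Real.norm_eq_abs, abs_of_nonneg (hw0 u), abs_neg]
    calc w u * |g' (u - x)| ≤ 1 * |g' (u - x)| :=
          mul_le_mul_of_nonneg_right (hw1 u) (abs_nonneg _)
      _ = |g' (u - x)| := one_mul _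
      _ ≤ C' * Real.exp (-(u - x) ^ 2 / (4 * b ^ 2)) := hg'b _
      _ ≤ C' * (Real.exp ((4 * b ^ 2)⁻¹) * Real.exp (-(u - x₀) ^ 2 / (8 * b ^ 2))) :=
          mul_le_mul_of_nonneg_left key hC'
      _ = C' * Real.exp ((4 * b ^ 2)⁻¹) * Real.exp (-(u - x₀) ^ 2 / (8 * b ^ 2)) := by ring
  have h_diff : ∀ᵐ u ∂(volume : Measure ℝ), ∀ x ∈ Metric.ball x₀ 1,
      HasDerivAt (fun x => w u * g (u - x)) (w u * -g' (u - x)) x := by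
    refine Filter.Eventually.of_forall fun u => fun x _ => ?_
    have h1 : HasDerivAt (fun x : ℝ => u - x) (-1) x := by
      simpa using (hasDerivAt_id x).const_sub u
    have h2 : HasDerivAt (fun x => g (u - x)) (-g' (u - x)) x := by
      have := (hg (u - x)).comp x h1
      exact this.congr_deriv (by simp)
    exact h2.const_mul (w u)
  exact (hasDerivAt_integral_of_dominated_loc_of_deriv_le (Metric.ball_mem_nhds x₀ one_pos)
    (Filter.Eventually.of_forall hF_meas) hFint hF'_meas h_bound bound_int h_diff).2


lemma ftc_bound_nonneg {φ ψ : ℝ → ℝ} (hφ0 : φ 0 = 0)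
    (hd : ∀ t, HasDerivAt φ (ψ t) t) (hψc : Continuous ψ)
    {c : ℝ} {n : ℕ} (hbnd : ∀ t, |ψ t| ≤ c * |t| ^ n) {y : ℝ} (hy : 0 ≤ y) :
    |φ y| ≤ c * |y| ^ (n + 1) / (n + 1) := by
  have hc : 0 ≤ c := by
    have := (abs_nonneg (ψ 1)).trans (hbnd 1)
    simpa using this
  have hftc : ∫ t in (0:ℝ)..y, ψ t = φ y - φ 0 :=
    intervalIntegral.integral_eq_sub_of_hasDerivAt (fun t _ => hd t)
      (hψc.intervalIntegrable 0 y)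
  have h1 : |φ y| = |∫ t in (0:ℝ)..y, ψ t| := by rw [hftc, hφ0, sub_zero]
  rw [h1]
  have h2 : |∫ t in (0:ℝ)..y, ψ t| ≤ ∫ t in (0:ℝ)..y, |ψ t| := by
    simpa [Real.norm_eq_abs] using intervalIntegral.norm_integral_le_integral_norm (μ := volume)
      (f := ψ) (a := 0) (b := y) hy
  have h3 : ∫ t in (0:ℝ)..y, |ψ t| ≤ ∫ t in (0:ℝ)..y, c * t ^ n := by
    apply intervalIntegral.integral_mono_on hy
    · exact (hψc.abs.intervalIntegrable 0 y)
    · exact ((continuous_const.mul (continuous_pow n)).intervalIntegrable 0 y)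
    · intro t ht
      have ht0 : 0 ≤ t := ht.1
      have := hbnd t
      rwa [abs_of_nonneg ht0] at this
  have h4 : ∫ t in (0:ℝ)..y, c * t ^ n = c * y ^ (n + 1) / (n + 1) := by
    rw [intervalIntegral.integral_const_mul, integral_pow]
    push_cast
    ring
  have hy' : |y| = y := abs_of_nonneg hy
  rw [hy']
  linarith [h2, h3.trans_eq h4]

lemma ftc_bound {φ ψ : ℝ → ℝ} (hφ0 : φ 0 = 0)
    (hd : ∀ t, HasDerivAt φ (ψ t) t) (hψc : Continuous ψ)
    {c : ℝ} {n : ℕ} (hbnd : ∀ t, |ψ t| ≤ c * |t| ^ n) (y : ℝ) :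
    |φ y| ≤ c * |y| ^ (n + 1) / (n + 1) := by
  rcases le_or_gt 0 y with hy | hy
  · exact ftc_bound_nonneg hφ0 hd hψc hbnd hy
  · have hd2 : ∀ t, HasDerivAt (fun t => φ (-t)) (-ψ (-t)) t := by
      intro t
      have h1 : HasDerivAt (fun t : ℝ => -t) (-1) t := by
        exact (hasDerivAt_id t).neg
      have := (hd (-t)).comp t h1
      exact this.congr_deriv (by simp)
    have hbnd2 : ∀ t, |(fun t => -ψ (-t)) t| ≤ c * |t| ^ n := by
      intro t
      simpa [abs_neg] using hbnd (-t)
    have hres := ftc_bound_nonneg (φ := fun t => φ (-t)) (ψ := fun t => -ψ (-t))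
      (by simpa using hφ0) hd2 (by fun_prop) hbnd2 (y := -y) (by linarith)
    simpa [abs_neg] using hres

lemma taylor2_bound {f f1 f2 f3 : ℝ → ℝ}
    (h1 : ∀ x, HasDerivAt f (f1 x) x) (h2 : ∀ x, HasDerivAt f1 (f2 x) x)
    (h3 : ∀ x, HasDerivAt f2 (f3 x) x) {M : ℝ} (hM : ∀ x, |f3 x| ≤ M)
    (x y : ℝ) :
    |f (x + y) - f x - y * f1 x - y ^ 2 * f2 x / 2| ≤ M * |y| ^ 3 / 6 := by
  have hf2c : Continuous f2 := by
    rw [continuous_iff_continuousAt]; exact fun t => (h3 t).continuousAt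
  have hf1c : Continuous f1 := by
    rw [continuous_iff_continuousAt]; exact fun t => (h2 t).continuousAt
  have hM0 : 0 ≤ M := (abs_nonneg _).trans (hM 0)
  -- Lipschitz bound on f2
  have hlip : ∀ s t : ℝ, |f2 s - f2 t| ≤ M * |s - t| := by
    intro s t
    have := convex_univ.norm_image_sub_le_of_norm_hasDerivWithin_le
      (f := f2) (f' := f3) (fun u _ => (h3 u).hasDerivWithinAt)
      (fun u _ => by simpa [Real.norm_eq_abs] using hM u) (Set.mem_univ t) (Set.mem_univ s)
    simpa [Real.norm_eq_abs] using this
  -- first remainder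
  set R1 : ℝ → ℝ := fun t => f1 (x + t) - f1 x - t * f2 x with hR1
  have hR1d : ∀ t, HasDerivAt R1 (f2 (x + t) - f2 x) t := by
    intro t
    have ha : HasDerivAt (fun t : ℝ => x + t) 1 t := by
      simpa using (hasDerivAt_id t).const_add x
    have hb1 : HasDerivAt (fun t => f1 (x + t)) (f2 (x + t)) t := by
      have := (h2 (x + t)).comp t ha
      exact this.congr_deriv (by simp)
    have hb2 : HasDerivAt (fun t : ℝ => t * f2 x) (f2 x) t := by
      simpa using (hasDerivAt_id t).mul_const (f2 x)
    exact (hb1.sub_const (f1 x)).sub hb2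
  have hR1b : ∀ t, |f2 (x + t) - f2 x| ≤ M * |t| ^ 1 := by
    intro t
    simpa using hlip (x + t) x
  have hR1bound : ∀ t, |R1 t| ≤ (M / 2) * |t| ^ 2 := by
    intro t
    have h := ftc_bound (φ := R1) (ψ := fun t => f2 (x + t) - f2 x)
      (by simp [hR1]) hR1d (by fun_prop) hR1b t
    refine le_trans h (le_of_eq ?_)
    push_cast
    ring
  -- second remainder
  set R : ℝ → ℝ := fun t => f (x + t) - f x - t * f1 x - t ^ 2 * f2 x / 2 with hR
  have hRd : ∀ t, HasDerivAt R (R1 t) t := by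
    intro t
    have ha : HasDerivAt (fun t : ℝ => x + t) 1 t := by
      simpa using (hasDerivAt_id t).const_add x
    have hb1 : HasDerivAt (fun t => f (x + t)) (f1 (x + t)) t := by
      have := (h1 (x + t)).comp t ha
      exact this.congr_deriv (by simp)
    have hb2 : HasDerivAt (fun t : ℝ => t * f1 x) (f1 x) t := by
      simpa using (hasDerivAt_id t).mul_const (f1 x)
    have hb3 : HasDerivAt (fun t : ℝ => t ^ 2 * f2 x / 2) (t * f2 x) t := by
      have := ((hasDerivAt_pow 2 t).mul_const (f2 x)).div_const 2
      refine this.congr_deriv ?_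
      push_cast
      ring
    have := ((hb1.sub_const (f x)).sub hb2).sub hb3
    exact this
  have hR1c : Continuous R1 := by
    rw [continuous_iff_continuousAt]; exact fun t => (hR1d t).continuousAt
  have hfinal := ftc_bound (φ := R) (ψ := R1) (by simp [hR]) hRd hR1c
    (c := M / 2) (n := 2) hR1bound y
  have hRy : |R y| ≤ M * |y| ^ 3 / 6 := by
    refine le_trans hfinal (le_of_eq ?_)
    push_cast
    ring
  calc |f (x + y) - f x - y * f1 x - y ^ 2 * f2 x / 2| = |R y| := by rw [hR]
    _ ≤ M * |y| ^ 3 / 6 := hRy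


lemma integrable_gauss0 (hb : b ≠ 0) :
    Integrable (fun u : ℝ => Real.exp (-u ^ 2 / (4 * b ^ 2))) := by
  have := integrable_gauss hb (by norm_num : (0:ℝ) < 4) 0
  simpa using this

lemma integrable_k3 (hb : b ≠ 0) : Integrable (k3 b) := by
  obtain ⟨C, hC⟩ := exists_bound_k3 hb
  refine Integrable.mono' ((integrable_gauss0 hb).const_mul C)
    continuous_k3.aestronglyMeasurable (Filter.Eventually.of_forall fun t => ?_)
  simpa [Real.norm_eq_abs] using hC t

lemma k3_neg_arg (t : ℝ) : k3 b (-t) = -(k3 b t) := by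
  simp only [k3, k0]
  rw [show ((-t:ℝ)) ^ 2 = t ^ 2 by ring, show ((-t:ℝ)) ^ 3 = -t ^ 3 by ring]
  ring

lemma tendsto_k2_atTop (hb : b ≠ 0) : Filter.Tendsto (k2 b) Filter.atTop (nhds 0) := by
  have h1 : Filter.Tendsto (fun t : ℝ => t ^ 2 / (2 * b ^ 2)) Filter.atTop Filter.atTop := by
    apply Filter.Tendsto.atTop_div_const (by positivity)
    exact Filter.tendsto_pow_atTop (by norm_num)
  have h2 : Filter.Tendsto (fun s : ℝ => s * Real.exp (-s)) Filter.atTop (nhds 0) := by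
    simpa using Real.tendsto_pow_mul_exp_neg_atTop_nhds_zero 1
  have h3 : Filter.Tendsto (fun s : ℝ => Real.exp (-s)) Filter.atTop (nhds 0) := by
    simpa using Real.tendsto_pow_mul_exp_neg_atTop_nhds_zero 0
  have hA := (h2.comp h1).const_mul (2 * cc b / b ^ 2)
  have hB := (h3.comp h1).const_mul (cc b / b ^ 2)
  have hcomb := hA.sub hB
  simp only [mul_zero, sub_zero] at hcomb
  refine hcomb.congr fun t => ?_
  simp only [Function.comp]
  rw [k2, k0]
  have hb2 : (b:ℝ) ^ 2 ≠ 0 := pow_ne_zero 2 hb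
  rw [show -(t ^ 2 / (2 * b ^ 2)) = -t ^ 2 / (2 * b ^ 2) by ring]
  field_simp

/-- the positive zero of `k3` -/
def aa (b : ℝ) : ℝ := Real.sqrt 3 * |b|

lemma aa_nonneg : 0 ≤ aa b := by
  unfold aa; positivity

lemma aa_sq : aa b ^ 2 = 3 * b ^ 2 := by
  unfold aa
  rw [mul_pow, sq_abs, Real.sq_sqrt (by norm_num : (3:ℝ) ≥ 0)]

lemma k3_nonneg_on (hb : b ≠ 0) {t : ℝ} (ht0 : 0 ≤ t) (ht : t ≤ aa b) : 0 ≤ k3 b t := by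
  have hta : t ^ 2 ≤ 3 * b ^ 2 := by
    calc t ^ 2 ≤ aa b ^ 2 := by
          apply pow_le_pow_left₀ ht0 ht
      _ = 3 * b ^ 2 := aa_sq
  rw [k3]
  apply mul_nonneg _ (k0_pos hb t).le
  have hb2 : (0:ℝ) < b ^ 2 := by positivity
  have e : (3 * t / b ^ 2 - t ^ 3 / b ^ 4) / b ^ 2 = t * (3 * b ^ 2 - t ^ 2) / b ^ 6 := by
    field_simp
  rw [e]
  apply div_nonneg (mul_nonneg ht0 (by linarith)) (by positivity)

lemma k3_nonpos_on (hb : b ≠ 0) {t : ℝ} (ht : aa b ≤ t) : k3 b t ≤ 0 := by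
  have ht0 : 0 ≤ t := le_trans aa_nonneg ht
  have hta : 3 * b ^ 2 ≤ t ^ 2 := by
    calc 3 * b ^ 2 = aa b ^ 2 := aa_sq.symm
      _ ≤ t ^ 2 := by apply pow_le_pow_left₀ aa_nonneg ht
  rw [k3]
  apply mul_nonpos_of_nonpos_of_nonneg _ (k0_pos hb t).le
  have e : (3 * t / b ^ 2 - t ^ 3 / b ^ 4) / b ^ 2 = t * (3 * b ^ 2 - t ^ 2) / b ^ 6 := by
    field_simp
  rw [e]
  apply div_nonpos_of_nonpos_of_nonneg (mul_nonpos_of_nonneg_of_nonpos ht0 (by linarith))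
    (by positivity)

lemma integral_abs_k3_Ioi (hb : b ≠ 0) :
    ∫ t in Ioi (0:ℝ), |k3 b t| = 2 * k2 b (aa b) - k2 b 0 := by
  have hint := integrable_k3 hb
  have hsplit : Ioi (0:ℝ) = Ioc 0 (aa b) ∪ Ioi (aa b) := (Ioc_union_Ioi_eq_Ioi aa_nonneg).symm
  rw [hsplit, setIntegral_union (Ioc_disjoint_Ioi le_rfl) measurableSet_Ioi
    hint.abs.integrableOn hint.abs.integrableOn]
  have p1 : ∫ t in Ioc (0:ℝ) (aa b), |k3 b t| = k2 b (aa b) - k2 b 0 := by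
    rw [setIntegral_congr_fun measurableSet_Ioc
      (fun t ht => abs_of_nonneg (k3_nonneg_on hb ht.1.le ht.2))]
    rw [← intervalIntegral.integral_of_le aa_nonneg]
    exact intervalIntegral.integral_eq_sub_of_hasDerivAt (fun t _ => hasDerivAt_k2 hb t)
      (continuous_k3.intervalIntegrable _ _)
  have p2 : ∫ t in Ioi (aa b), |k3 b t| = k2 b (aa b) := by
    rw [setIntegral_congr_fun measurableSet_Ioi
      (fun t ht => abs_of_nonpos (k3_nonpos_on hb (le_of_lt ht)))]
    have := MeasureTheory.integral_Ioi_of_hasDerivAt_of_tendsto'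
      (f := fun t => -(k2 b t)) (f' := fun t => -(k3 b t)) (a := aa b)
      (fun t _ => (hasDerivAt_k2 hb t).neg) hint.neg.integrableOn
      (by simpa using (tendsto_k2_atTop hb).neg)
    rw [this]
    ring
  rw [p1, p2]
  ring

lemma integral_abs_k3 (hb : b ≠ 0) :
    ∫ t, |k3 b t| = 2 * (2 * k2 b (aa b) - k2 b 0) := by
  have hint := (integrable_k3 hb).abs
  rw [← intervalIntegral.integral_Iic_add_Ioi hint.integrableOn hint.integrableOn]
  have hneg : ∫ t in Iic (0:ℝ), |k3 b t| = ∫ t in Ioi (0:ℝ), |k3 b t| := by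
    have h1 : ∫ t in Iic (0:ℝ), |k3 b t| = ∫ t in Iic (0:ℝ), |k3 b (-t)| := by
      apply setIntegral_congr_fun measurableSet_Iic
      intro t _
      show |k3 b t| = |k3 b (-t)|
      rw [k3_neg_arg, abs_neg]
    rw [h1, integral_comp_neg_Iic 0 (fun t => |k3 b t|), neg_zero]
  rw [hneg, integral_abs_k3_Ioi hb]
  ring

lemma k2_at_aa (hb : b ≠ 0) : k2 b (aa b) = 2 * cc b / b ^ 2 * Real.exp (-(3:ℝ)/2) := by
  have hb2 : (b:ℝ) ^ 2 ≠ 0 := pow_ne_zero 2 hb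
  rw [k2, k0, aa_sq]
  rw [show -(3 * b ^ 2) / (2 * b ^ 2) = -(3:ℝ)/2 by field_simp]
  field_simp
  ring

lemma k2_at_zero : k2 b 0 = -(cc b / b ^ 2) := by
  simp [k2, k0]
  ring

lemma int_abs_k3_le (hb : b ≠ 0) : ∫ t, |k3 b t| ≤ 2.4 / |b| ^ 3 := by
  rw [integral_abs_k3 hb, k2_at_aa hb, k2_at_zero]
  have hB : (0:ℝ) < |b| := abs_pos.mpr hb
  have hs : (0:ℝ) < Real.sqrt (2 * Real.pi) := Real.sqrt_pos.mpr (by positivity)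
  have hsge : (2.5:ℝ) ≤ Real.sqrt (2 * Real.pi) := by
    rw [show (2.5:ℝ) = Real.sqrt (2.5 ^ 2) by
      rw [Real.sqrt_sq (by norm_num)]]
    apply Real.sqrt_le_sqrt
    nlinarith [Real.pi_gt_d6]
  have h52 : (5/2:ℝ) ≤ Real.exp (3/2) := by
    have := Real.add_one_le_exp (3/2:ℝ)
    linarith
  have he : Real.exp (-(3:ℝ)/2) ≤ 2/5 := by
    rw [show (-(3:ℝ)/2) = -(3/2:ℝ) by norm_num, Real.exp_neg]
    have h2 : (Real.exp (3/2))⁻¹ ≤ ((5:ℝ)/2)⁻¹ := by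
      apply inv_anti₀ (by norm_num) h52
    rw [show ((5:ℝ)/2)⁻¹ = 2/5 by norm_num] at h2
    exact h2
  have hepos : 0 < Real.exp (-(3:ℝ)/2) := Real.exp_pos _
  have habs3 : |b| ^ 3 = |b| * b ^ 2 := by rw [← sq_abs b]; ring
  have lhs_eq : 2 * (2 * (2 * cc b / b ^ 2 * Real.exp (-(3:ℝ)/2)) - -(cc b / b ^ 2))
      = (8 * Real.exp (-(3:ℝ)/2) + 2) / (Real.sqrt (2 * Real.pi) * |b| ^ 3) := by
    rw [cc, habs3]
    field_simp
    ring
  rw [lhs_eq, div_le_div_iff₀ (by positivity) (by positivity)]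
  have hb3 : (0:ℝ) < |b| ^ 3 := by positivity
  have key : 8 * Real.exp (-(3:ℝ)/2) + 2 ≤ 2.4 * Real.sqrt (2 * Real.pi) := by nlinarith
  nlinarith [mul_le_mul_of_nonneg_right key hb3.le]


lemma h3_le (hb : b ≠ 0) {w : ℝ → ℝ} (hw : Measurable w)
    (hw0 : ∀ u, 0 ≤ w u) (hw1 : ∀ u, w u ≤ 1) (x : ℝ) :
    |∫ u, w u * -(k3 b (u - x))| ≤ ∫ t, |k3 b t| := by
  obtain ⟨C3, hC3⟩ := exists_bound_k3 hb
  have hint : Integrable (fun u => w u * -(k3 b (u - x))) :=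
    integrable_dominated hb hw hw0 hw1 continuous_k3.neg.measurable
      (fun t => by simpa [abs_neg] using hC3 t) x
  have hint2 : Integrable (fun u => |k3 b (u - x)|) :=
    ((integrable_k3 hb).comp_sub_right x).abs
  calc |∫ u, w u * -(k3 b (u - x))| ≤ ∫ u, |w u| * |k3 b (u - x)| := by
        have := norm_integral_le_integral_norm (μ := volume) (fun u => w u * -(k3 b (u - x)))
        simpa [Real.norm_eq_abs, abs_mul] using this
    _ ≤ ∫ u, |k3 b (u - x)| := by
        apply integral_mono _ hint2
        · intro u
          show |w u| * |k3 b (u - x)| ≤ |k3 b (u - x)|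
          rw [abs_of_nonneg (hw0 u)]
          calc w u * |k3 b (u - x)| ≤ 1 * |k3 b (u - x)| :=
                mul_le_mul_of_nonneg_right (hw1 u) (abs_nonneg _)
            _ = |k3 b (u - x)| := one_mul _
        · have : (fun u => |w u| * |k3 b (u - x)|) = fun u => |w u * -(k3 b (u - x))| := by
            funext u
            rw [abs_mul, abs_neg]
          rw [this]
          exact hint.abs
    _ = ∫ t, |k3 b t| := by
        exact integral_sub_right_eq_self (fun t => |k3 b t|) x


lemma k0_eq_pdf (hb : b ≠ 0) (t : ℝ) :
    |b⁻¹| * gaussianPDFReal 0 1 (t / b) = k0 b t := by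
  rw [gaussianPDFReal, k0, cc]
  have hb0 : (b:ℝ) ≠ 0 := hb
  simp only [NNReal.coe_one, mul_one, sub_zero]
  rw [show (-(t / b) ^ 2 / 2 : ℝ) = -t ^ 2 / (2 * b ^ 2) by rw [div_pow]; ring]
  rw [abs_inv, mul_inv]
  ring

lemma repr_lemma {Ω' S : Type} [MeasurableSpace Ω'] [MeasurableSpace S]
    (P : Measure Ω') [IsProbabilityMeasure P]
    (η : Ω' → S) (hη : Measurable η)
    (Z : Ω' → ℝ) (hZ : Measurable Z)
    (hgauss : Measure.map Z P = gaussianReal 0 1)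
    (hindep : IndepFun Z η P)
    (A : Set (ℝ × S)) (hA : MeasurableSet A) (hb : b ≠ 0) (x : ℝ) :
    (P {ω | (x + b * Z ω, η ω) ∈ A}).toReal
      = ∫ u, ((P.map η) (Prod.mk u ⁻¹' A)).toReal * k0 b (u - x) := by
  set ν := P.map η with hν
  have hνprob : IsProbabilityMeasure ν := Measure.isProbabilityMeasure_map hη.aemeasurable
  have hpair : Measurable fun ω => (Z ω, η ω) := hZ.prodMk hη
  have hmap : P.map (fun ω => (Z ω, η ω)) = (gaussianReal 0 1).prod ν := by
    rw [← hgauss, hν]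
    exact (ProbabilityTheory.indepFun_iff_map_prod_eq_prod_map_map hZ.aemeasurable
      hη.aemeasurable).mp hindep
  have hm : Measurable fun p : ℝ × S => (x + b * p.1, p.2) :=
    ((measurable_fst.const_mul b).const_add x).prodMk measurable_snd
  set B : Set (ℝ × S) := (fun p : ℝ × S => (x + b * p.1, p.2)) ⁻¹' A with hB
  have hBmeas : MeasurableSet B := hm hA
  have e1 : P {ω | (x + b * Z ω, η ω) ∈ A} = ((gaussianReal 0 1).prod ν) B := by
    rw [← hmap, Measure.map_apply hpair hBmeas]
    rfl
  set W : ℝ → ℝ≥0∞ := fun u => ν (Prod.mk u ⁻¹' A) with hW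
  have hWmeas : Measurable W := measurable_measure_prodMk_left hA
  have e2 : ((gaussianReal 0 1).prod ν) B = ∫⁻ z, W (x + b * z) ∂(gaussianReal 0 1) := by
    rw [Measure.prod_apply hBmeas]
    rfl
  have e3 : gaussianReal (0:ℝ) (1:ℝ≥0) = volume.withDensity (gaussianPDF 0 1) :=
    gaussianReal_of_var_ne_zero 0 one_ne_zero
  have hWT : Measurable fun z => W (x + b * z) :=
    hWmeas.comp (measurable_const_add x |>.comp (measurable_const_mul b)) |>.comp measurable_id
  have e4 : ∫⁻ z, W (x + b * z) ∂(gaussianReal 0 1)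
      = ∫⁻ z, gaussianPDF 0 1 z * W (x + b * z) ∂volume := by
    rw [e3, lintegral_withDensity_eq_lintegral_mul volume (measurable_gaussianPDF 0 1) hWT]
    rfl
  -- change of variables
  set T : ℝ → ℝ := fun z => x + b * z with hT
  have hTmeas : Measurable T := (measurable_const_mul b).const_add x
  have hmapT : Measure.map T volume = ENNReal.ofReal |b⁻¹| • volume := by
    have h1 : Measure.map (fun z : ℝ => b * z) volume = ENNReal.ofReal |b⁻¹| • volume :=
      Real.map_volume_mul_left hb
    have h2 : Measure.map (fun z : ℝ => x + z) volume = volume :=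
      map_add_left_eq_self volume x
    have hcomp : T = (fun z : ℝ => x + z) ∘ fun z : ℝ => b * z := rfl
    rw [hcomp, ← Measure.map_map (measurable_const_add x) (measurable_const_mul b), h1,
      Measure.map_smul, h2]
  set G : ℝ → ℝ≥0∞ := fun u => gaussianPDF 0 1 ((u - x) / b) * W u with hG
  have hGmeas : Measurable G :=
    ((measurable_gaussianPDF 0 1).comp ((measurable_id.sub_const x).div_const b)).mul hWmeas
  have e5 : ∫⁻ z, gaussianPDF 0 1 z * W (x + b * z) ∂volume
      = ENNReal.ofReal |b⁻¹| * ∫⁻ u, G u ∂volume := by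
    have h6 : ∫⁻ u, G u ∂(Measure.map T volume) = ∫⁻ z, G (T z) ∂volume :=
      lintegral_map hGmeas hTmeas
    have h7 : ∀ z, G (T z) = gaussianPDF 0 1 z * W (x + b * z) := by
      intro z
      have harg : (T z - x) / b = z := by
        rw [hT]
        field_simp
        ring
      rw [hG]
      simp only []
      rw [harg]
    rw [← lintegral_congr h7, ← h6, hmapT, lintegral_smul_measure, smul_eq_mul]
  -- pass to real integrand
  have hWne : ∀ u, W u ≠ ⊤ := fun u => measure_ne_top ν _
  have e6 : ENNReal.ofReal |b⁻¹| * ∫⁻ u, G u ∂volume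
      = ∫⁻ u, ENNReal.ofReal ((W u).toReal * k0 b (u - x)) ∂volume := by
    rw [← lintegral_const_mul' _ _ (by simp : ENNReal.ofReal |b⁻¹| ≠ ⊤)]
    apply lintegral_congr
    intro u
    show ENNReal.ofReal |b⁻¹| * (gaussianPDF 0 1 ((u - x) / b) * W u)
        = ENNReal.ofReal ((W u).toReal * k0 b (u - x))
    rw [gaussianPDF]
    calc ENNReal.ofReal |b⁻¹| * (ENNReal.ofReal (gaussianPDFReal 0 1 ((u - x) / b)) * W u)
        = (ENNReal.ofReal |b⁻¹| * ENNReal.ofReal (gaussianPDFReal 0 1 ((u - x) / b))) * W u := by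
          ring
      _ = ENNReal.ofReal (|b⁻¹| * gaussianPDFReal 0 1 ((u - x) / b)) * W u := by
          rw [← ENNReal.ofReal_mul (abs_nonneg _)]
      _ = ENNReal.ofReal (k0 b (u - x)) * W u := by rw [k0_eq_pdf hb (u - x)]
      _ = ENNReal.ofReal (k0 b (u - x)) * ENNReal.ofReal ((W u).toReal) := by
          rw [ENNReal.ofReal_toReal (hWne u)]
      _ = ENNReal.ofReal (k0 b (u - x) * (W u).toReal) :=
          (ENNReal.ofReal_mul (k0_pos hb _).le).symm
      _ = ENNReal.ofReal ((W u).toReal * k0 b (u - x)) := by rw [mul_comm]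
  have hwmeas : Measurable fun u => (W u).toReal := hWmeas.ennreal_toReal
  have e7 : ∫ u, (W u).toReal * k0 b (u - x)
      = (∫⁻ u, ENNReal.ofReal ((W u).toReal * k0 b (u - x)) ∂volume).toReal := by
    rw [integral_eq_lintegral_of_nonneg_ae]
    · exact Filter.Eventually.of_forall fun u =>
        mul_nonneg ENNReal.toReal_nonneg (k0_pos hb _).le
    · exact (hwmeas.mul ((continuous_k0.measurable).comp
        (measurable_id.sub_const x))).aestronglyMeasurable
  rw [e1, e2, e4, e5, e6, e7]

end SmoothAux

open SmoothAux

/-- **Lemma 3.4** (Gaussian smoothing): `h(x) := P(x + bZ ∈ A(η))` is twice continuously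
differentiable, with Taylor remainder bounded by `0.4 |y/b|³`. -/
theorem smoothing_lemma_gaussian
    {Ω' S : Type} [MeasurableSpace Ω'] [MeasurableSpace S]
    (P : Measure Ω') [IsProbabilityMeasure P]
    (η : Ω' → S) (hη : Measurable η)
    (Z : Ω' → ℝ) (hZ : Measurable Z)
    (hgauss : Measure.map Z P = gaussianReal 0 1)
    (hindep : IndepFun Z η P)
    (A : Set (ℝ × S)) (hA : MeasurableSet A) (b : ℝ) (hb : b ≠ 0) :
    ∃ h' h'' : ℝ → ℝ,
      (∀ x, HasDerivAt (fun x => (P {ω | (x + b * Z ω, η ω) ∈ A}).toReal) (h' x) x) ∧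
      (∀ x, HasDerivAt h' (h'' x) x) ∧ Continuous h'' ∧
      ∀ x y,
        |(P {ω | (x + y + b * Z ω, η ω) ∈ A}).toReal -
            (P {ω | (x + b * Z ω, η ω) ∈ A}).toReal - y * h' x - y ^ 2 * h'' x / 2|
          ≤ 0.4 * |y / b| ^ 3 := by
  classical
  have hνprob : IsProbabilityMeasure (P.map η) := Measure.isProbabilityMeasure_map hη.aemeasurable
  set w : ℝ → ℝ := fun u => ((P.map η) (Prod.mk u ⁻¹' A)).toReal with hwdef
  have hw : Measurable w := (measurable_measure_prodMk_left hA).ennreal_toReal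
  have hw0 : ∀ u, 0 ≤ w u := fun u => ENNReal.toReal_nonneg
  have hw1 : ∀ u, w u ≤ 1 := by
    intro u
    have h := prob_le_one (μ := P.map η) (s := Prod.mk u ⁻¹' A)
    have h2 := ENNReal.toReal_mono (by simp) h
    simpa using h2
  have hrepr : ∀ x : ℝ, (P {ω | (x + b * Z ω, η ω) ∈ A}).toReal
      = ∫ u, w u * k0 b (u - x) :=
    fun x => repr_lemma P η hη Z hZ hgauss hindep A hA hb x
  obtain ⟨C0, hC0⟩ := exists_bound_k0 hb
  obtain ⟨C1, hC1⟩ := exists_bound_k1 hb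
  obtain ⟨C2, hC2⟩ := exists_bound_k2 hb
  obtain ⟨C3, hC3⟩ := exists_bound_k3 hb
  have hd1 : ∀ x, HasDerivAt (fun x => ∫ u, w u * k0 b (u - x))
      (∫ u, w u * -(k1 b (u - x))) x :=
    fun x => hasDerivAt_smoothed hb hw hw0 hw1 (hasDerivAt_k0 hb)
      continuous_k1.measurable hC0 hC1 x
  have hd2' : ∀ x, HasDerivAt (fun x => ∫ u, w u * -(k1 b (u - x)))
      (∫ u, w u * -(-(k2 b (u - x)))) x :=
    fun x => hasDerivAt_smoothed hb hw hw0 hw1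
      (g := fun t => -(k1 b t)) (g' := fun t => -(k2 b t))
      (fun t => (hasDerivAt_k1 hb t).neg) continuous_k2.neg.measurable
      (fun t => by simpa [abs_neg] using hC1 t)
      (fun t => by simpa [abs_neg] using hC2 t) x
  have hd2 : ∀ x, HasDerivAt (fun x => ∫ u, w u * -(k1 b (u - x)))
      (∫ u, w u * k2 b (u - x)) x := by
    intro x
    have := hd2' x
    simpa only [neg_neg] using this
  have hd3 : ∀ x, HasDerivAt (fun x => ∫ u, w u * k2 b (u - x))
      (∫ u, w u * -(k3 b (u - x))) x :=
    fun x => hasDerivAt_smoothed hb hw hw0 hw1 (hasDerivAt_k2 hb)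
      continuous_k3.measurable hC2 hC3 x
  refine ⟨fun x => ∫ u, w u * -(k1 b (u - x)), fun x => ∫ u, w u * k2 b (u - x),
    ?_, ?_, ?_, ?_⟩
  · intro x
    have heq : (fun x => (P {ω | (x + b * Z ω, η ω) ∈ A}).toReal)
        = fun x => ∫ u, w u * k0 b (u - x) := funext hrepr
    rw [heq]
    exact hd1 x
  · exact hd2
  · rw [continuous_iff_continuousAt]
    exact fun x => (hd3 x).continuousAt
  · intro x y
    rw [hrepr (x + y), hrepr x]
    have hM : ∀ x, |∫ u, w u * -(k3 b (u - x))| ≤ ∫ t, |k3 b t| :=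
      fun x => h3_le hb hw hw0 hw1 x
    have htay := taylor2_bound hd1 hd2 hd3 hM x y
    refine htay.trans ?_
    have hMle := int_abs_k3_le hb
    have hB : (0:ℝ) < |b| := abs_pos.mpr hb
    have h1 : |y / b| ^ 3 = |y| ^ 3 / |b| ^ 3 := by rw [abs_div, div_pow]
    rw [h1]
    have hy3 : (0:ℝ) ≤ |y| ^ 3 := by positivity
    calc (∫ t, |k3 b t|) * |y| ^ 3 / 6 ≤ (2.4 / |b| ^ 3) * |y| ^ 3 / 6 := by gcongr
      _ = 0.4 * (|y| ^ 3 / |b| ^ 3) := by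
          field_simp
          ring
  -- end

end
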